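/- Let ∇ ⊂ ℝ⁴ be defined by 0 ≤ x ≤ 1, 0 ≤ y ≤ 1, 0 ≤ z ≤ 1, 0 ≤ w ≤ 1, z+w-x-y ≥ 0, 1+x+y-z-w ≥ 0. For every positive integer n, the number of lattice points in n∇ equals C(n+4,4) + 5·C(n+3,4) + 5·C(n+2,4) = (11n⁴ + 50n³ + 85n² + 70n + 24)/24. -/

import Mathlib

open Pointwise

def nabla : Set (ℝ × ℝ × ℝ × ℝ) :=
  {p : ℝ × ℝ × ℝ × ℝ |
    0 ≤ p.1 ∧
    p.1 ≤ 1 ∧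
    0 ≤ p.2.1 ∧
    p.2.1 ≤ 1 ∧
    0 ≤ p.2.2.1 ∧
    p.2.2.1 ≤ 1 ∧
    0 ≤ p.2.2.2 ∧
    p.2.2.2 ≤ 1 ∧
    0 ≤ p.2.2.1 + p.2.2.2 - p.1 - p.2.1 ∧
    0 ≤ 1 + p.1 + p.2.1 - p.2.2.1 - p.2.2.2}

namespace Stmt17Aux

open Finset

lemma hs (k : ℕ) : ∀ m, ∑ j ∈ range m, (j + k).choose k = (m + k).choose (k + 1) := by
  intro m
  induction m with
  | zero => simp [Nat.choose_eq_zero_of_lt]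
  | succ m ih =>
      rw [Finset.sum_range_succ, ih, show m + 1 + k = (m + k) + 1 from by ring,
        Nat.choose_succ_succ]
      simp [Nat.succ_eq_add_one]
      omega

lemma sumLevel (k : ℕ) (N c : ℕ) (h : c ≤ N) :
    ∑ y ∈ range (N + 1), ((c - y) + k).choose (k + 1) = (c + k + 1).choose (k + 2) := by
  have h1 : ∑ y ∈ range (N + 1), ((c - y) + k).choose (k + 1)
      = ∑ y ∈ range (c + 1), ((c - y) + k).choose (k + 1) := by
    rw [eq_comm]
    apply Finset.sum_subset
    · intro x hx; simp at *; omega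
    · intro x hx hx'
      simp at hx hx'
      have : c - x = 0 := by omega
      rw [this]
      simp [Nat.choose_eq_zero_of_lt]
  rw [h1, ← Finset.sum_range_reflect]
  have h2 : ∀ y ∈ range (c + 1), ((c - (c + 1 - 1 - y)) + k).choose (k + 1)
      = (y + k).choose (k + 1) := by
    intro y hy; simp at hy
    congr 2
    omega
  rw [Finset.sum_congr rfl h2, Finset.sum_range_succ']
  have h3 : (0 + k).choose (k+1) = 0 := by simp [Nat.choose_eq_zero_of_lt]
  rw [h3, add_zero]
  have h4 : ∀ y ∈ range c, (y + 1 + k).choose (k + 1) = (y + (k+1)).choose (k+1) := by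
    intro y _; congr 1; ring
  rw [Finset.sum_congr rfl h4, hs (k+1) c, show c + (k+1) = c + k + 1 from by ring]

lemma ch2 (m : ℕ) : 2 * Nat.choose (m + 1) 2 = (m + 1) * m := by
  induction m with
  | zero => simp
  | succ m ih =>
      rw [show m + 1 + 1 = (m + 1) + 1 from rfl, Nat.choose_succ_succ (m + 1) 1]
      zify at ih ⊢
      simp [Nat.choose_one_right]
      linear_combination ih

lemma ch3 (m : ℕ) : 6 * Nat.choose (m + 2) 3 = (m + 2) * (m + 1) * m := by
  induction m with
  | zero => simp [Nat.choose_eq_zero_of_lt]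
  | succ m ih =>
      rw [show m + 1 + 2 = (m + 2) + 1 from by ring, Nat.choose_succ_succ (m + 2) 2]
      have h2 := ch2 (m + 1)
      zify at ih h2 ⊢
      push_cast
      linear_combination ih + 3 * h2

lemma ch4 (m : ℕ) : 24 * Nat.choose (m + 3) 4 = (m + 3) * (m + 2) * (m + 1) * m := by
  induction m with
  | zero => simp [Nat.choose_eq_zero_of_lt]
  | succ m ih =>
      rw [show m + 1 + 3 = (m + 3) + 1 from by ring, Nat.choose_succ_succ (m + 3) 3]
      have h3 := ch3 (m + 1)
      zify at ih h3 ⊢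
      push_cast
      linear_combination ih + 4 * h3

def Bx (n : ℕ) : Finset (ℕ × ℕ × ℕ × ℕ) :=
  range (n+1) ×ˢ range (n+1) ×ˢ range (n+1) ×ˢ range (n+1)

lemma mem_Bx {n : ℕ} {v : ℕ × ℕ × ℕ × ℕ} :
    v ∈ Bx n ↔ v.1 ≤ n ∧ v.2.1 ≤ n ∧ v.2.2.1 ≤ n ∧ v.2.2.2 ≤ n := by
  simp [Bx, Finset.mem_product, Nat.lt_succ_iff]

lemma card_Bx (n : ℕ) : (Bx n).card = (n+1)^4 := by simp [Bx]; ring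

lemma cardBx (n : ℕ) (p : ℕ × ℕ × ℕ × ℕ → Prop) [DecidablePred p] :
    ((Bx n).filter p).card
      = ∑ x ∈ range (n+1), ∑ y ∈ range (n+1), ∑ z ∈ range (n+1), ∑ w ∈ range (n+1),
          if p (x, y, z, w) then 1 else 0 := by
  rw [Finset.card_filter, Bx]
  rw [Finset.sum_product]
  simp only [Finset.sum_product]

lemma cardS4 (n : ℕ) :
    ((Bx n).filter fun v => v.1 + v.2.1 + v.2.2.1 + v.2.2.2 < n).card = (n+3).choose 4 := by
  rw [cardBx]
  have e1 : ∀ x y z : ℕ, (∑ w ∈ range (n+1), if x+y+z+w < n then (1:ℕ) else 0)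
      = ((n - (x+y)) - z) + 0 := by
    intro x y z
    rw [← Finset.card_filter]
    have h : (range (n+1)).filter (fun w => x+y+z+w < n) = range (n - (x+y+z)) := by
      ext w; simp only [Finset.mem_filter, Finset.mem_range]; omega
    rw [h, card_range]; omega
  have e2 : ∀ x y : ℕ, (∑ z ∈ range (n+1), (((n - (x+y)) - z) + 0))
      = (((n - x) - y) + 1).choose 2 := by
    intro x y
    have h0 : ∀ z ∈ range (n+1), ((n - (x+y)) - z) + 0 = (((n - (x+y)) - z) + 0).choose 1 := by
      intro z _; rw [Nat.choose_one_right]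
    rw [Finset.sum_congr rfl h0, sumLevel 0 n (n - (x+y)) (by omega)]
    congr 1
    omega
  have e3 : ∀ x : ℕ, (∑ y ∈ range (n+1), ((((n - x) - y) + 1).choose 2))
      = ((n - x) + 2).choose 3 := by
    intro x
    rw [sumLevel 1 n (n - x) (by omega)]
  have e4 : (∑ x ∈ range (n+1), (((n - x) + 2).choose 3)) = (n + 3).choose 4 := by
    rw [sumLevel 2 n n le_rfl]
  rw [Finset.sum_congr rfl fun x _ => Finset.sum_congr rfl fun y _ =>
      Finset.sum_congr rfl fun z _ => e1 x y z]
  rw [Finset.sum_congr rfl fun x _ => Finset.sum_congr rfl fun y _ => e2 x y]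
  rw [Finset.sum_congr rfl fun x _ => e3 x]
  exact e4

lemma pairCount (n s : ℕ) (hs : s ≤ 2 * n) :
    ((range (n+1) ×ˢ range (n+1)).filter fun q => s = q.1 + q.2).card
      = s + 1 - 2 * (s - n) := by
  have him : ((range (n+1) ×ˢ range (n+1)).filter fun q => s = q.1 + q.2)
      = (Finset.Icc (s - n) (min s n)).image (fun z => (z, s - z)) := by
    ext ⟨z, w⟩
    simp only [Finset.mem_filter, Finset.mem_product, Finset.mem_range, Finset.mem_image,
      Finset.mem_Icc, Prod.mk.injEq]
    constructor
    · rintro ⟨⟨hz, hw⟩, he⟩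
      exact ⟨z, by omega, rfl, by omega⟩
    · rintro ⟨a, ⟨ha1, ha2⟩, rfl, rfl⟩
      omega
  rw [him, Finset.card_image_of_injective _ (fun a b h => (Prod.mk.injEq _ _ _ _ ▸ h).1),
    Nat.card_Icc]
  omega

lemma sum_y_sub (n x : ℕ) (hx : x ≤ n) :
    ∑ y ∈ range (n+1), ((x + y) - n) = (x + 1).choose 2 := by
  rw [← Finset.sum_range_reflect]
  have h0 : ∀ y ∈ range (n+1), ((x + (n + 1 - 1 - y)) - n) = ((x - y) + 0).choose 1 := by
    intro y hy
    simp only [Finset.mem_range] at hy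
    rw [Nat.choose_one_right]
    omega
  rw [Finset.sum_congr rfl h0, sumLevel 0 n x hx]

lemma sumD (n : ℕ) :
    ∑ x ∈ range (n+1), ∑ y ∈ range (n+1), ((x + y) - n) = (n + 2).choose 3 := by
  have h1 : ∀ x ∈ range (n+1), ∑ y ∈ range (n+1), ((x + y) - n) = (x+1).choose 2 := by
    intro x hx
    simp only [Finset.mem_range] at hx
    exact sum_y_sub n x (by omega)
  rw [Finset.sum_congr rfl h1, ← Finset.sum_range_reflect]
  have h2 : ∀ x ∈ range (n+1), ((n + 1 - 1 - x) + 1).choose 2 = ((n - x) + 1).choose 2 := by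
    intro x hx
    simp only [Finset.mem_range] at hx
    have hh : n + 1 - 1 - x = n - x := by omega
    rw [hh]
  rw [Finset.sum_congr rfl h2, sumLevel 1 n n le_rfl]

lemma sumXY1 (n : ℕ) : ∑ x ∈ range (n+1), ∑ y ∈ range (n+1), (x + y + 1) = (n+1)^3 := by
  have hg := Finset.sum_range_id_mul_two (n+1)
  have h1 : ∀ x ∈ range (n+1), ∑ y ∈ range (n+1), (x + y + 1)
      = (n+1) * (x+1) + ∑ j ∈ range (n+1), j := by
    intro x _
    have : ∀ y ∈ range (n+1), x + y + 1 = (x + 1) + y := fun y _ => by ring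
    rw [Finset.sum_congr rfl this, Finset.sum_add_distrib, Finset.sum_const, card_range,
      smul_eq_mul]
  rw [Finset.sum_congr rfl h1, Finset.sum_add_distrib, Finset.sum_const, card_range,
    smul_eq_mul, ← Finset.mul_sum, Finset.sum_add_distrib, Finset.sum_const, card_range,
    smul_eq_mul, mul_one]
  simp only [Nat.add_sub_cancel] at hg
  zify at hg ⊢
  linear_combination ((n:ℤ) + 1) * hg

lemma cardE (n : ℕ) :
    ((Bx n).filter fun v => v.1 + v.2.1 = v.2.2.1 + v.2.2.2).card + 2 * (n+2).choose 3
      = (n+1)^3 := by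
  rw [cardBx]
  have e1 : ∀ x ∈ range (n+1), ∀ y ∈ range (n+1),
      (∑ z ∈ range (n+1), ∑ w ∈ range (n+1), if x + y = z + w then (1:ℕ) else 0)
        = x + y + 1 - 2 * ((x + y) - n) := by
    intro x hx y hy
    simp only [Finset.mem_range] at hx hy
    have h : (∑ z ∈ range (n+1), ∑ w ∈ range (n+1), if x + y = z + w then (1:ℕ) else 0)
        = ((range (n+1) ×ˢ range (n+1)).filter fun q => x + y = q.1 + q.2).card := by
      rw [Finset.card_filter, Finset.sum_product]
    rw [h, pairCount n (x+y) (by omega)]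
  rw [Finset.sum_congr rfl fun x hx => Finset.sum_congr rfl fun y hy => e1 x hx y hy]
  rw [← sumXY1 n, ← sumD n, Finset.mul_sum]
  simp only [Finset.mul_sum]
  rw [← Finset.sum_add_distrib]
  refine Finset.sum_congr rfl fun x hx => ?_
  rw [← Finset.sum_add_distrib]
  refine Finset.sum_congr rfl fun y hy => ?_
  simp only [Finset.mem_range] at hx hy
  omega

lemma partA (n : ℕ) :
    ((Bx n).filter fun v => v.1+v.2.1 ≤ v.2.2.1+v.2.2.2 ∧ v.2.2.1+v.2.2.2 ≤ v.1+v.2.1+n).card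
    + ((Bx n).filter fun v => v.2.2.1+v.2.2.2 < v.1+v.2.1).card
    + ((Bx n).filter fun v => v.1+v.2.1+n < v.2.2.1+v.2.2.2).card = (n+1)^4 := by
  classical
  have h0 := Finset.card_filter_add_card_filter_not (s := Bx n)
    (p := fun v => v.1+v.2.1 ≤ v.2.2.1+v.2.2.2 ∧ v.2.2.1+v.2.2.2 ≤ v.1+v.2.1+n)
  have h1 := Finset.card_filter_add_card_filter_not
    (s := (Bx n).filter fun v => ¬(v.1+v.2.1 ≤ v.2.2.1+v.2.2.2 ∧ v.2.2.1+v.2.2.2 ≤ v.1+v.2.1+n))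
    (p := fun v => v.2.2.1+v.2.2.2 < v.1+v.2.1)
  rw [Finset.filter_filter, Finset.filter_filter] at h1
  have e1 : ((Bx n).filter fun v =>
      ¬(v.1+v.2.1 ≤ v.2.2.1+v.2.2.2 ∧ v.2.2.1+v.2.2.2 ≤ v.1+v.2.1+n) ∧ v.2.2.1+v.2.2.2 < v.1+v.2.1)
      = (Bx n).filter fun v => v.2.2.1+v.2.2.2 < v.1+v.2.1 :=
    Finset.filter_congr (fun v _ => by omega)
  have e2 : ((Bx n).filter fun v =>
      ¬(v.1+v.2.1 ≤ v.2.2.1+v.2.2.2 ∧ v.2.2.1+v.2.2.2 ≤ v.1+v.2.1+n) ∧ ¬ v.2.2.1+v.2.2.2 < v.1+v.2.1)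
      = (Bx n).filter fun v => v.1+v.2.1+n < v.2.2.1+v.2.2.2 :=
    Finset.filter_congr (fun v _ => by omega)
  rw [e1, e2] at h1
  rw [card_Bx] at h0
  omega

lemma partB (n : ℕ) :
    ((Bx n).filter fun v => v.1+v.2.1 < v.2.2.1+v.2.2.2).card
    + ((Bx n).filter fun v => v.2.2.1+v.2.2.2 < v.1+v.2.1).card
    + ((Bx n).filter fun v => v.1+v.2.1 = v.2.2.1+v.2.2.2).card = (n+1)^4 := by
  classical
  have h0 := Finset.card_filter_add_card_filter_not (s := Bx n)
    (p := fun v => v.1+v.2.1 < v.2.2.1+v.2.2.2)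
  have h1 := Finset.card_filter_add_card_filter_not
    (s := (Bx n).filter fun v => ¬ v.1+v.2.1 < v.2.2.1+v.2.2.2)
    (p := fun v => v.2.2.1+v.2.2.2 < v.1+v.2.1)
  rw [Finset.filter_filter, Finset.filter_filter] at h1
  have e1 : ((Bx n).filter fun v =>
      (¬ v.1+v.2.1 < v.2.2.1+v.2.2.2) ∧ v.2.2.1+v.2.2.2 < v.1+v.2.1)
      = (Bx n).filter fun v => v.2.2.1+v.2.2.2 < v.1+v.2.1 :=
    Finset.filter_congr (fun v _ => by omega)
  have e2 : ((Bx n).filter fun v =>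
      (¬ v.1+v.2.1 < v.2.2.1+v.2.2.2) ∧ ¬ v.2.2.1+v.2.2.2 < v.1+v.2.1)
      = (Bx n).filter fun v => v.1+v.2.1 = v.2.2.1+v.2.2.2 :=
    Finset.filter_congr (fun v _ => by omega)
  rw [e1, e2] at h1
  rw [card_Bx] at h0
  omega

lemma cardSwap (n : ℕ) :
    ((Bx n).filter fun v => v.2.2.1+v.2.2.2 < v.1+v.2.1).card
      = ((Bx n).filter fun v => v.1+v.2.1 < v.2.2.1+v.2.2.2).card := by
  apply Finset.card_bij (fun v _ => (v.2.2.1, v.2.2.2, v.1, v.2.1))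
  · intro a ha
    simp only [Finset.mem_filter, mem_Bx] at ha ⊢
    exact ⟨⟨ha.1.2.2.1, ha.1.2.2.2, ha.1.1, ha.1.2.1⟩, ha.2⟩
  · intro a ha b hb h
    simp only [Prod.ext_iff] at h ⊢
    tauto
  · intro b hb
    refine ⟨(b.2.2.1, b.2.2.2, b.1, b.2.1), ?_, rfl⟩
    simp only [Finset.mem_filter, mem_Bx] at hb ⊢
    exact ⟨⟨hb.1.2.2.1, hb.1.2.2.2, hb.1.1, hb.1.2.1⟩, hb.2⟩

lemma cardRefl (n : ℕ) :
    ((Bx n).filter fun v => v.1+v.2.1+n < v.2.2.1+v.2.2.2).card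
      = ((Bx n).filter fun v => v.1+v.2.1+v.2.2.1+v.2.2.2 < n).card := by
  apply Finset.card_bij (fun v _ => (v.1, v.2.1, n - v.2.2.1, n - v.2.2.2))
  · intro a ha
    simp only [Finset.mem_filter, mem_Bx] at ha ⊢
    omega
  · intro a ha b hb h
    simp only [Finset.mem_filter, mem_Bx] at ha hb
    simp only [Prod.ext_iff] at h ⊢
    omega
  · rintro ⟨b1, b2, b3, b4⟩ hb
    simp only [Finset.mem_filter, mem_Bx] at hb
    refine ⟨(b1, b2, n - b3, n - b4), ?_, ?_⟩
    · simp only [Finset.mem_filter, mem_Bx]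
      omega
    · simp only [Prod.mk.injEq]
      exact ⟨trivial, trivial, by omega, by omega⟩

lemma memIff (n : ℕ) (hn : 0 < n) (v : ℤ × ℤ × ℤ × ℤ) :
    (((v.1 : ℝ), (v.2.1 : ℝ), (v.2.2.1 : ℝ), (v.2.2.2 : ℝ)) ∈ (n : ℝ) • nabla)
      ↔ (0 ≤ v.1 ∧ v.1 ≤ n ∧ 0 ≤ v.2.1 ∧ v.2.1 ≤ n ∧ 0 ≤ v.2.2.1 ∧ v.2.2.1 ≤ n ∧
        0 ≤ v.2.2.2 ∧ v.2.2.2 ≤ n ∧ v.1 + v.2.1 ≤ v.2.2.1 + v.2.2.2 ∧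
        v.2.2.1 + v.2.2.2 ≤ v.1 + v.2.1 + n) := by
  obtain ⟨a, b, c, d⟩ := v
  have hn' : (0:ℝ) < n := by exact_mod_cast hn
  have hne : (n:ℝ) ≠ 0 := ne_of_gt hn'
  rw [Set.mem_smul_set_iff_inv_smul_mem₀ hne, nabla]
  simp only [Prod.smul_mk, smul_eq_mul, Set.mem_setOf_eq]
  have hA : ∀ r : ℝ, (0 ≤ (n:ℝ)⁻¹ * r ↔ 0 ≤ r) := by
    intro r
    rw [inv_mul_eq_div, le_div_iff₀ hn', zero_mul]
  have hB : ∀ r : ℝ, ((n:ℝ)⁻¹ * r ≤ 1 ↔ r ≤ n) := by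
    intro r
    rw [inv_mul_eq_div, div_le_one hn']
  have hC : (n:ℝ)⁻¹ * c + (n:ℝ)⁻¹ * d - (n:ℝ)⁻¹ * a - (n:ℝ)⁻¹ * b
      = (n:ℝ)⁻¹ * ((c:ℝ) + d - a - b) := by ring
  have hD : 1 + (n:ℝ)⁻¹ * a + (n:ℝ)⁻¹ * b - (n:ℝ)⁻¹ * c - (n:ℝ)⁻¹ * d
      = (n:ℝ)⁻¹ * ((n:ℝ) + a + b - c - d) := by
    field_simp
  rw [hC, hD]
  simp only [hA, hB]
  constructor
  · rintro ⟨h1, h2, h3, h4, h5, h6, h7, h8, h9, h10⟩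
    refine ⟨by exact_mod_cast h1, by exact_mod_cast h2, by exact_mod_cast h3,
      by exact_mod_cast h4, by exact_mod_cast h5, by exact_mod_cast h6,
      by exact_mod_cast h7, by exact_mod_cast h8, ?_, ?_⟩
    · have h9' : (0:ℝ) ≤ ((c + d - a - b : ℤ) : ℝ) := by push_cast; linarith
      have h9i : (0:ℤ) ≤ c + d - a - b := by exact_mod_cast h9'
      omega
    · have h10' : (0:ℝ) ≤ (((n:ℤ) + a + b - c - d : ℤ) : ℝ) := by push_cast; linarith
      have h10i : (0:ℤ) ≤ (n:ℤ) + a + b - c - d := by exact_mod_cast h10'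
      omega
  · rintro ⟨h1, h2, h3, h4, h5, h6, h7, h8, h9, h10⟩
    refine ⟨by exact_mod_cast h1, by exact_mod_cast h2, by exact_mod_cast h3,
      by exact_mod_cast h4, by exact_mod_cast h5, by exact_mod_cast h6,
      by exact_mod_cast h7, by exact_mod_cast h8, ?_, ?_⟩
    · have h9i : (0:ℤ) ≤ c + d - a - b := by omega
      have h9' : (0:ℝ) ≤ ((c + d - a - b : ℤ) : ℝ) := by exact_mod_cast h9i
      push_cast at h9'
      linarith
    · have h10i : (0:ℤ) ≤ (n:ℤ) + a + b - c - d := by omega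
      have h10' : (0:ℝ) ≤ (((n:ℤ) + a + b - c - d : ℤ) : ℝ) := by exact_mod_cast h10i
      push_cast at h10'
      linarith

def emb : (ℕ × ℕ × ℕ × ℕ) ↪ (ℤ × ℤ × ℤ × ℤ) where
  toFun := fun u => ((u.1 : ℤ), (u.2.1 : ℤ), (u.2.2.1 : ℤ), (u.2.2.2 : ℤ))
  inj' := by
    rintro ⟨a, b, c, d⟩ ⟨a', b', c', d'⟩ h
    simp only [Prod.mk.injEq, Nat.cast_inj] at h
    simp only [Prod.mk.injEq]
    exact h

end Stmt17Aux

open Stmt17Aux Finset in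
theorem stmt17 (n : ℕ) (hn : 0 < n) :
    {v : ℤ × ℤ × ℤ × ℤ | (((v.1 : ℝ), (v.2.1 : ℝ), (v.2.2.1 : ℝ), (v.2.2.2 : ℝ)) : ℝ × ℝ × ℝ × ℝ) ∈ (n : ℝ) • nabla}.ncard
        = Nat.choose (n + 4) 4 + 5 * Nat.choose (n + 3) 4 + 5 * Nat.choose (n + 2) 4 ∧
      ((Nat.choose (n + 4) 4 + 5 * Nat.choose (n + 3) 4 + 5 * Nat.choose (n + 2) 4 : ℚ))
        = (11 * (n : ℚ) ^ 4 + 50 * (n : ℚ) ^ 3 + 85 * (n : ℚ) ^ 2 + 70 * (n : ℚ) ^ 1 + 24) / 24 := by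
  obtain ⟨m, rfl⟩ : ∃ m, n = m + 1 := ⟨n - 1, by omega⟩
  set n := m + 1 with hn_def
  constructor
  · -- cardinality count
    have hset : {v : ℤ × ℤ × ℤ × ℤ |
        (((v.1 : ℝ), (v.2.1 : ℝ), (v.2.2.1 : ℝ), (v.2.2.2 : ℝ)) : ℝ × ℝ × ℝ × ℝ) ∈ (n : ℝ) • nabla}
        = ↑(((Bx n).filter fun v =>
            v.1+v.2.1 ≤ v.2.2.1+v.2.2.2 ∧ v.2.2.1+v.2.2.2 ≤ v.1+v.2.1+n).map emb) := by
      ext ⟨a, b, c, d⟩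
      rw [Set.mem_setOf_eq, memIff n hn (a, b, c, d)]
      simp only [Finset.coe_map, Set.mem_image, Finset.mem_coe, Finset.mem_filter, mem_Bx]
      constructor
      · rintro ⟨h1, h2, h3, h4, h5, h6, h7, h8, h9, h10⟩
        refine ⟨(a.toNat, b.toNat, c.toNat, d.toNat), ?_, ?_⟩
        · show (a.toNat ≤ n ∧ b.toNat ≤ n ∧ c.toNat ≤ n ∧ d.toNat ≤ n) ∧
            a.toNat + b.toNat ≤ c.toNat + d.toNat ∧ c.toNat + d.toNat ≤ a.toNat + b.toNat + n
          omega
        · show ((a.toNat : ℤ), (b.toNat : ℤ), (c.toNat : ℤ), (d.toNat : ℤ))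
            = ((a, b, c, d) : ℤ × ℤ × ℤ × ℤ)
          simp only [Prod.mk.injEq]
          refine ⟨by omega, by omega, by omega, by omega⟩
      · rintro ⟨⟨u1, u2, u3, u4⟩, hu, he⟩
        have hu' : (u1 ≤ n ∧ u2 ≤ n ∧ u3 ≤ n ∧ u4 ≤ n) ∧
            u1 + u2 ≤ u3 + u4 ∧ u3 + u4 ≤ u1 + u2 + n := hu
        have he' : ((u1 : ℤ), (u2 : ℤ), (u3 : ℤ), (u4 : ℤ)) = ((a, b, c, d) : ℤ × ℤ × ℤ × ℤ) := he
        simp only [Prod.mk.injEq] at he'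
        obtain ⟨e1, e2, e3, e4⟩ := he'
        subst e1 e2 e3 e4
        refine ⟨by omega, by omega, by omega, by omega, by omega, by omega, by omega, by omega,
          by omega, by omega⟩
    rw [hset, Set.ncard_coe_finset, Finset.card_map]
    -- now a pure counting statement
    have g1 := partA n
    have g2 := partB n
    have g3 := cardSwap n
    have gN2 := (cardRefl n).trans (cardS4 n)
    have g6 := cardE n
    have g7 := ch3 n
    have g8 := ch4 (n + 1)
    have g9 := ch4 n
    have g10 := ch4 m
    have hkey : 24 * ((Bx n).filter fun v =>
        v.1+v.2.1 ≤ v.2.2.1+v.2.2.2 ∧ v.2.2.1+v.2.2.2 ≤ v.1+v.2.1+n).card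
        = 24 * (Nat.choose (n + 4) 4 + 5 * Nat.choose (n + 3) 4 + 5 * Nat.choose (n + 2) 4) := by
      have e8 : n + 1 + 3 = n + 4 := by omega
      have e9 : n + 3 = n + 3 := rfl
      have e10 : m + 3 = n + 2 := by omega
      rw [e8] at g8
      rw [e10] at g10
      zify at g1 g2 g3 gN2 g6 g7 g8 g9 g10 ⊢
      have hm : (m:ℤ) = n - 1 := by omega
      rw [hm] at g10
      linear_combination 24*g1 - 12*g2 - 12*g3 - 24*gN2 + 12*g6 - 4*g7 - g8 - 6*g9 - 5*g10
    omega
  · -- rational identity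
    have g8 := ch4 (n + 1)
    have g9 := ch4 n
    have g10 := ch4 m
    have e8 : n + 1 + 3 = n + 4 := by omega
    have e10 : m + 3 = n + 2 := by omega
    rw [e8] at g8
    rw [e10] at g10
    have q8 : (24 : ℚ) * (Nat.choose (n+4) 4 : ℚ) = (n+4) * (n+3) * (n+2) * (n+1) := by
      exact_mod_cast congrArg (fun t : ℕ => (t : ℚ)) g8
    have q9 : (24 : ℚ) * (Nat.choose (n+3) 4 : ℚ) = (n+3) * (n+2) * (n+1) * n := by
      exact_mod_cast congrArg (fun t : ℕ => (t : ℚ)) g9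
    have q10 : (24 : ℚ) * (Nat.choose (n+2) 4 : ℚ) = (n+2) * (n+1) * (m+1) * m := by
      exact_mod_cast congrArg (fun t : ℕ => (t : ℚ)) g10
    rw [eq_div_iff (by norm_num : (24:ℚ) ≠ 0)]
    push_cast [hn_def]
    push_cast [hn_def] at q8 q9 q10
    linear_combination q8 + 5 * q9 + 5 * q10
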